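/- arXiv:2504.09545 — 7 statements merged into one kernel-verified Lean document; each statement's English description precedes it below -/
import Mathlib

section
/- For any infinite set A of positive integers, the quantity |d(A, n+1) − d(A, n)| is unbounded as n ranges over the positive integers; that is, for every K there exists a positive integer n with |d(A, n+1) − d(A, n)| ≥ K. -/
/-- `countDiv A m` is the number of elements `a ∈ A` with `a ∣ m`. -/
noncomputable def countDiv (A : Set ℕ) (m : ℤ) : ℕ := {a ∈ A | (a : ℤ) ∣ m}.ncard

/-- Sárközy's Problem 25: for any infinite set `A` of positive integers,
`|d(A, n+1) − d(A, n)|` is unbounded over positive integers `n`. -/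
theorem sarkozy_problem25 (A : Set ℕ) (hApos : ∀ a ∈ A, 0 < a) (hAinf : A.Infinite) :
    ∀ K : ℕ, ∃ n : ℕ, 0 < n ∧
      (K : ℤ) ≤ |(countDiv A ((n : ℤ) + 1) : ℤ) - (countDiv A (n : ℤ) : ℤ)| := by
  intro K
  -- pick a finite subset S of A with K+2 elements
  obtain ⟨S, hSA, hSfin, hScard⟩ := hAinf.exists_subset_ncard_eq (K + 2)
  lift S to Finset ℕ using hSfin
  rw [Set.ncard_coe_finset] at hScard
  set L : ℕ := S.prod id with hL
  have hLpos : 0 < L := Finset.prod_pos fun a ha => hApos a (hSA ha)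
  -- get a prime p > L with p ≡ 1 mod L
  obtain ⟨p, hp, hLp, hmod⟩ := Nat.exists_prime_gt_modEq_one L hLpos.ne'
  have hp2 : 2 ≤ p := hp.two_le
  refine ⟨p - 1, by omega, ?_⟩
  have hcast : ((p - 1 : ℕ) : ℤ) + 1 = (p : ℤ) := by
    push_cast [Nat.cast_sub (by omega : 1 ≤ p)]; ring
  -- L divides p - 1
  have hLdvd : L ∣ p - 1 := (Nat.modEq_iff_dvd' (by omega)).mp hmod.symm
  have hppos : 0 < p - 1 := by omega
  -- lower bound : countDiv A (p-1) ≥ K + 2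
  have hlow : K + 2 ≤ countDiv A ((p - 1 : ℕ) : ℤ) := by
    have hsub : (↑S : Set ℕ) ⊆ {a ∈ A | (a : ℤ) ∣ ((p - 1 : ℕ) : ℤ)} := by
      intro a ha
      refine ⟨hSA ha, ?_⟩
      exact_mod_cast Int.natCast_dvd_natCast.mpr
        ((Finset.dvd_prod_of_mem id ha).trans hLdvd)
    have hfin : {a ∈ A | (a : ℤ) ∣ ((p - 1 : ℕ) : ℤ)}.Finite := by
      apply (Set.finite_Iic (p - 1)).subset
      rintro a ⟨-, hdvd⟩
      exact Nat.le_of_dvd hppos (Int.natCast_dvd_natCast.mp hdvd)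
    calc K + 2 = (↑S : Set ℕ).ncard := by rw [Set.ncard_coe_finset, hScard]
      _ ≤ _ := Set.ncard_le_ncard hsub hfin
  -- upper bound : countDiv A p ≤ 2
  have hup : countDiv A (((p - 1 : ℕ) : ℤ) + 1) ≤ 2 := by
    rw [hcast]
    have hsub : {a ∈ A | (a : ℤ) ∣ (p : ℤ)} ⊆ ({1, p} : Set ℕ) := by
      rintro a ⟨-, hdvd⟩
      rcases (Nat.Prime.eq_one_or_self_of_dvd hp a
        (Int.natCast_dvd_natCast.mp hdvd)) with h | h
      · exact Or.inl h
      · exact Or.inr h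
    calc countDiv A (p : ℤ) ≤ ({1, p} : Set ℕ).ncard :=
          Set.ncard_le_ncard hsub (Set.toFinite _)
      _ ≤ 2 := by
          refine (Set.ncard_insert_le _ _).trans ?_
          simp
  have h1 : (K : ℤ) ≤ (countDiv A ((p - 1 : ℕ) : ℤ) : ℤ) -
      (countDiv A (((p - 1 : ℕ) : ℤ) + 1) : ℤ) := by
    omega
  calc (K : ℤ) ≤ _ := h1
    _ ≤ |(countDiv A ((p - 1 : ℕ) : ℤ) : ℤ) -
        (countDiv A (((p - 1 : ℕ) : ℤ) + 1) : ℤ)| := le_abs_self _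
    _ = _ := abs_sub_comm _ _
end

section
/- Let A = {4m : m a positive integer}. Then for every positive integer n, min over pairs 1 ≤ i ≠ j ≤ 3 of |d(A, n+i) − d(A, n+j)| equals 0; in particular this minimum is bounded as n → ∞. -/
lemma countDiv_zero_of_not_four_dvd (m : ℤ) (h : ¬ (4 : ℤ) ∣ m) :
    countDiv {x : ℕ | ∃ k : ℕ, 0 < k ∧ x = 4 * k} m = 0 := by
  unfold countDiv
  convert Set.ncard_empty ℕ
  ext a
  simp only [Set.mem_setOf_eq, Set.mem_empty_iff_false, iff_false, not_and]
  rintro ⟨k, hk, rfl⟩ hdvd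
  exact h (dvd_trans ⟨(k : ℤ), by push_cast; ring⟩ hdvd)

/-- Chen's counterexample: for `A = {4m : m ≥ 1}` and every positive integer `n`,
the minimum over pairs `1 ≤ i ≠ j ≤ 3` of `|d(A, n+i) − d(A, n+j)|` equals `0`
(some pair gives difference `0`); in particular this minimum is bounded. -/
theorem chen_counterexample :
    ∀ n : ℕ, 0 < n → ∃ i j : ℕ, 1 ≤ i ∧ i ≤ 3 ∧ 1 ≤ j ∧ j ≤ 3 ∧ i ≠ j ∧
      |(countDiv {x : ℕ | ∃ m : ℕ, 0 < m ∧ x = 4 * m} ((n : ℤ) + i) : ℤ) -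
        (countDiv {x : ℕ | ∃ m : ℕ, 0 < m ∧ x = 4 * m} ((n : ℤ) + j) : ℤ)| = 0 := by
  intro n _
  have hmod : (n : ℤ) % 4 = 0 ∨ (n : ℤ) % 4 = 1 ∨ (n : ℤ) % 4 = 2 ∨ (n : ℤ) % 4 = 3 := by omega
  have key : ∀ i j : ℕ, ¬ (4 : ℤ) ∣ ((n : ℤ) + i) → ¬ (4 : ℤ) ∣ ((n : ℤ) + j) →
      |(countDiv {x : ℕ | ∃ m : ℕ, 0 < m ∧ x = 4 * m} ((n : ℤ) + i) : ℤ) -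
        (countDiv {x : ℕ | ∃ m : ℕ, 0 < m ∧ x = 4 * m} ((n : ℤ) + j) : ℤ)| = 0 := by
    intro i j hi hj
    rw [countDiv_zero_of_not_four_dvd _ hi, countDiv_zero_of_not_four_dvd _ hj]
    simp
  rcases hmod with h | h | h | h
  · exact ⟨1, 2, by norm_num, by norm_num, by norm_num, by norm_num, by norm_num,
      key 1 2 (by omega) (by omega)⟩
  · exact ⟨1, 2, by norm_num, by norm_num, by norm_num, by norm_num, by norm_num,
      key 1 2 (by omega) (by omega)⟩
  · exact ⟨1, 3, by norm_num, by norm_num, by norm_num, by norm_num, by norm_num,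
      key 1 3 (by omega) (by omega)⟩
  · exact ⟨2, 3, by norm_num, by norm_num, by norm_num, by norm_num, by norm_num,
      key 2 3 (by omega) (by omega)⟩
end

section
/- Let A be an infinite set of positive integers, let e be a nonzero integer and h an integer. Then the function n ↦ d(A, e(n+h)) is unbounded on the positive integers: for every t there exists a positive integer n with d(A, en + eh) ≥ t. -/
/-- For an infinite set `A` of positive integers, a nonzero integer `e` and an integer `h`,
the function `n ↦ d(A, e(n+h))` is unbounded on the positive integers. -/
theorem caseIII_key (A : Set ℕ) (hApos : ∀ a ∈ A, 0 < a) (hAinf : A.Infinite)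
    (e : ℤ) (he : e ≠ 0) (h : ℤ) :
    ∀ t : ℕ, ∃ n : ℕ, 0 < n ∧ t ≤ countDiv A (e * n + e * h) := by
  intro t
  obtain ⟨S, hS, hcard⟩ := hAinf.exists_subset_card_eq t
  set P : ℕ := ∏ a ∈ S, a with hP
  have hPpos : 0 < P := Finset.prod_pos fun a ha => hApos a (hS ha)
  set k : ℤ := h.toNat + 1 with hk
  have hkh : h < k := by
    have := Int.self_le_toNat h
    omega
  have hPk : (0 : ℤ) < (P : ℤ) * k - h := by
    have h1 : (1 : ℤ) ≤ P := by exact_mod_cast hPpos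
    have hk0 : (0 : ℤ) < k := by positivity
    nlinarith
  refine ⟨((P : ℤ) * k - h).toNat, by omega, ?_⟩
  have hcast : (((P : ℤ) * k - h).toNat : ℤ) = (P : ℤ) * k - h := Int.toNat_of_nonneg (by omega)
  set m : ℤ := e * (((P : ℤ) * k - h).toNat : ℤ) + e * h with hm
  have hmval : m = e * k * P := by rw [hm, hcast]; ring
  have hmne : m ≠ 0 := by
    rw [hmval]
    have hk0 : (0 : ℤ) < k := by positivity
    have hP0 : ((P : ℤ)) ≠ 0 := by exact_mod_cast hPpos.ne'
    exact mul_ne_zero (mul_ne_zero he hk0.ne') hP0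
  have hsub : (S : Set ℕ) ⊆ {a ∈ A | (a : ℤ) ∣ m} := by
    intro a ha
    refine ⟨hS ha, ?_⟩
    have hdvd : (a : ℤ) ∣ (P : ℤ) := Int.natCast_dvd_natCast.mpr (Finset.dvd_prod_of_mem _ ha)
    rw [hmval]
    exact Dvd.dvd.mul_left hdvd _
  have hfin : ({a ∈ A | (a : ℤ) ∣ m}).Finite := by
    apply Set.Finite.subset (Set.finite_Icc 0 m.natAbs)
    rintro a ⟨haA, hdvd⟩
    have h1 : a ∣ m.natAbs := Int.natCast_dvd.mp hdvd
    have h2 : a ≤ m.natAbs := Nat.le_of_dvd (Int.natAbs_pos.mpr hmne) h1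
    exact ⟨Nat.zero_le a, h2⟩
  have hle := Set.ncard_le_ncard hsub hfin
  rw [Set.ncard_coe_finset, hcard] at hle
  exact hle
end

section
/- Let b, c, e, f be integers with be ≠ 0, bf ≠ ec, and b ∣ c. Then for every infinite set A of positive integers and every K, there exists a positive integer n with |d(A, bn+c) − d(A, en+f)| ≥ K; that is, limsup_{n→∞} |d(A, bn+c) − d(A, en+f)| = ∞. -/
lemma setDiv_finite (A : Set ℕ) (m : ℤ) (hm : m ≠ 0) :
    {a ∈ A | (a : ℤ) ∣ m}.Finite := by
  apply Set.Finite.subset (Set.finite_Icc 0 m.natAbs)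
  rintro a ⟨-, hd⟩
  have h1 : (a : ℤ) ∣ (m.natAbs : ℤ) := Int.dvd_natAbs.2 hd
  have h2 : (0 : ℤ) < (m.natAbs : ℤ) := by
    exact_mod_cast Nat.pos_of_ne_zero (fun h => hm (Int.natAbs_eq_zero.mp h))
  have := Int.le_of_dvd h2 h1
  exact ⟨Nat.zero_le a, by exact_mod_cast this⟩

lemma card_le_countDiv (A : Set ℕ) (m : ℤ) (hm : m ≠ 0) (S : Finset ℕ)
    (hS : ↑S ⊆ A) (hdvd : ∀ a ∈ S, (a : ℤ) ∣ m) : S.card ≤ countDiv A m := by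
  have hsub : (↑S : Set ℕ) ⊆ {a ∈ A | (a : ℤ) ∣ m} := fun a ha => ⟨hS ha, hdvd a ha⟩
  calc S.card = (↑S : Set ℕ).ncard := (Set.ncard_coe_finset S).symm
    _ ≤ _ := Set.ncard_le_ncard hsub (setDiv_finite A m hm)

lemma countDiv_le_card_divisors (A : Set ℕ) (m : ℤ) (hm : m ≠ 0) :
    countDiv A m ≤ m.natAbs.divisors.card := by
  have hsub : {a ∈ A | (a : ℤ) ∣ m} ⊆ ↑(m.natAbs.divisors) := by
    rintro a ⟨-, hd⟩
    have h1 : (a : ℤ) ∣ (m.natAbs : ℤ) := Int.dvd_natAbs.2 hd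
    have h2 : a ∣ m.natAbs := Int.natCast_dvd_natCast.mp h1
    simp [Nat.mem_divisors, h2, Int.natAbs_ne_zero.mpr hm]
  calc countDiv A m ≤ (↑(m.natAbs.divisors) : Set ℕ).ncard :=
        Set.ncard_le_ncard hsub (m.natAbs.divisors).finite_toSet
    _ = m.natAbs.divisors.card := Set.ncard_coe_finset _

lemma card_divisors_le_self (g : ℕ) (hg : 0 < g) : g.divisors.card ≤ g := by
  have hsub : g.divisors ⊆ Finset.Icc 1 g := by
    intro d hd
    rw [Nat.mem_divisors] at hd
    exact Finset.mem_Icc.mpr ⟨Nat.pos_of_dvd_of_pos hd.1 hg, Nat.le_of_dvd hg hd.1⟩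
  simpa using Finset.card_le_card hsub

/-- Sufficiency of Case IV: if `be ≠ 0`, `bf ≠ ec` and `b ∣ c`, then for every infinite
set `A` of positive integers, `|d(A, bn+c) − d(A, en+f)|` is unbounded. -/
theorem caseIV_sufficiency (b c e f : ℤ) (hbe : b * e ≠ 0) (hbf : b * f ≠ e * c)
    (hbc : b ∣ c) :
    ∀ A : Set ℕ, (∀ a ∈ A, 0 < a) → A.Infinite → ∀ K : ℕ, ∃ n : ℕ, 0 < n ∧
      (K : ℤ) ≤ |(countDiv A (b * n + c) : ℤ) - (countDiv A (e * n + f) : ℤ)| := by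
  intro A hApos hAinf K
  obtain ⟨c', rfl⟩ := hbc
  have hb : b ≠ 0 := fun h => hbe (by rw [h, zero_mul])
  have he : e ≠ 0 := fun h => hbe (by rw [h, mul_zero])
  set D : ℤ := f - e * c' with hDdef
  have hD : D ≠ 0 := by
    intro h
    apply hbf
    have : f = e * c' := by linarith [sub_eq_zero.mp h]
    rw [this]; ring
  set D' : ℕ := D.natAbs with hD'def
  have hD' : 0 < D' := Int.natAbs_pos.mpr hD
  -- choose K + 2*D' elements of A
  obtain ⟨S, hSsub, hScard⟩ := hAinf.exists_subset_card_eq (K + 2 * D')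
  set L : ℕ := S.lcm id with hLdef
  have hL : 0 < L := by
    rcases Nat.eq_zero_or_pos L with h | h
    · exfalso
      rw [hLdef] at h
      rw [Finset.lcm_eq_zero_iff] at h
      obtain ⟨a, ha, ha0⟩ := h
      simp only [id_eq] at ha0
      exact absurd (hApos a (hSsub ha)) (by omega)
    · exact h
  set E' : ℕ := (e * (L : ℤ)).natAbs with hE'def
  have heL : e * (L : ℤ) ≠ 0 := mul_ne_zero he (by exact_mod_cast hL.ne')
  have hE' : 0 < E' := Int.natAbs_pos.mpr heL
  -- sign
  set s : ℤ := (e * (L : ℤ)).sign with hsdef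
  have hsE : e * (L : ℤ) = s * (E' : ℤ) := by
    rw [hsdef, hE'def]
    exact (Int.sign_mul_natAbs _).symm
  have hsor : s = 1 ∨ s = -1 := by
    rcases heL.lt_or_gt with h | h
    · right; rw [hsdef, Int.sign_eq_neg_one_iff_neg]; exact h
    · left; rw [hsdef, Int.sign_eq_one_iff_pos]; exact h
  have hss : s * s = 1 := by rcases hsor with h | h <;> rw [h] <;> norm_num
  set D₁ : ℤ := s * D with hD₁def
  have hD₁abs : D₁.natAbs = D' := by
    rw [hD₁def, Int.natAbs_mul]
    rcases hsor with h | h <;> rw [h] <;> simp [hD'def]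
  set g : ℕ := Nat.gcd E' D' with hgdef
  have hg : 0 < g := Nat.gcd_pos_of_pos_left _ hE'
  have hgE : g ∣ E' := Nat.gcd_dvd_left _ _
  have hgD : g ∣ D' := Nat.gcd_dvd_right _ _
  set Nm : ℕ := E' / g with hNmdef
  have hNmE : g * Nm = E' := Nat.mul_div_cancel' hgE
  have hNm : 0 < Nm := Nat.div_pos (Nat.le_of_dvd hE' hgE) hg
  set d' : ℕ := D' / g with hd'def
  have hd'D : g * d' = D' := Nat.mul_div_cancel' hgD
  have hcop : Nat.Coprime Nm d' := Nat.coprime_div_gcd_div_gcd hg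
  -- integer d₁ with g * d₁ = D₁ and |d₁| = d'
  have hgD₁ : (g : ℤ) ∣ D₁ := by
    apply Int.dvd_natAbs.mp
    rw [hD₁abs]
    exact_mod_cast hgD
  obtain ⟨d₁, hd₁⟩ := hgD₁
  have hd₁abs : d₁.natAbs = d' := by
    have : g * d₁.natAbs = D' := by
      rw [← hD₁abs, hd₁, Int.natAbs_mul, Int.natAbs_natCast]
    exact Nat.eq_of_mul_eq_mul_left hg (this.trans hd'D.symm)
  -- Dirichlet
  haveI : NeZero Nm := ⟨hNm.ne'⟩
  have hunit : IsUnit ((d₁ : ZMod Nm)) := by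
    have hu : IsUnit ((d' : ℕ) : ZMod Nm) :=
      (ZMod.isUnit_iff_coprime d' Nm).mpr (Nat.coprime_comm.mp hcop)
    rcases Int.natAbs_eq d₁ with h | h
    · rw [h]; rw [hd₁abs] at *; push_cast; exact_mod_cast hu
    · rw [h]; rw [hd₁abs] at *; push_cast; exact hu.neg
  set B : ℕ := d₁.natAbs + Nm * (c'.natAbs + 1) + g + 1 with hBdef
  obtain ⟨p, hpB, hp, hpmod⟩ := Nat.forall_exists_prime_gt_and_eq_mod hunit B
  -- N ∣ p - d₁
  have hdvd : (Nm : ℤ) ∣ (p : ℤ) - d₁ := by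
    rw [← ZMod.intCast_zmod_eq_zero_iff_dvd]
    push_cast
    rw [hpmod]
    ring
  obtain ⟨q, hq⟩ := hdvd
  have hpd : (p : ℤ) - d₁ > (Nm : ℤ) * ((c'.natAbs : ℤ) + 1) := by
    have h1 : (d₁ : ℤ) ≤ d₁.natAbs := Int.le_natAbs
    have h2 : (B : ℤ) < p := by exact_mod_cast hpB
    have h3 : (B : ℤ) = (d₁.natAbs : ℤ) + (Nm : ℤ) * ((c'.natAbs : ℤ) + 1) + g + 1 := by
      rw [hBdef]; push_cast; ring
    have h4 : (0 : ℤ) ≤ g := Int.natCast_nonneg g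
    linarith
  have hq1 : ((c'.natAbs : ℤ) + 1) < q := by
    rw [hq] at hpd
    have hNmpos : (0 : ℤ) < (Nm : ℤ) := by exact_mod_cast hNm
    exact lt_of_mul_lt_mul_left hpd (le_of_lt hNmpos)
  have hqpos : 0 < q := by
    have : (0:ℤ) ≤ (c'.natAbs : ℤ) := Int.natCast_nonneg _
    omega
  -- define n
  have hnpos : 0 < (L : ℤ) * q - c' := by
    have hL1 : (1 : ℤ) ≤ (L : ℤ) := by exact_mod_cast hL
    have hq0 : (L : ℤ) * q ≥ q := le_mul_of_one_le_left (le_of_lt hqpos) hL1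
    have habs : c' ≤ (c'.natAbs : ℤ) := Int.le_natAbs
    omega
  set n : ℕ := ((L : ℤ) * q - c').toNat with hndef
  have hn : (n : ℤ) = (L : ℤ) * q - c' := Int.toNat_of_nonneg hnpos.le
  refine ⟨n, by exact_mod_cast hn ▸ hnpos, ?_⟩
  -- first value : b*n + b*c' = b * (L*q)
  have hv1 : b * (n : ℤ) + b * c' = b * ((L : ℤ) * q) := by rw [hn]; ring
  have hm1 : b * ((L : ℤ) * q) ≠ 0 := by
    apply mul_ne_zero hb
    apply mul_ne_zero _ hqpos.ne'
    exact_mod_cast hL.ne'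
  -- second value : e*n + f = s * (g * p)
  have hv2 : e * (n : ℤ) + f = s * ((g : ℤ) * p) := by
    have hgNm : (g : ℤ) * Nm = (E' : ℤ) := by exact_mod_cast hNmE
    have hDD : f = D + e * c' := by rw [hDdef]; ring
    rw [hn, hDD]
    have expand : e * ((L:ℤ) * q - c') + (D + e * c') = (e * (L:ℤ)) * q + D := by ring
    rw [expand, hsE, ← hgNm]
    have : (Nm : ℤ) * q = (p : ℤ) - d₁ := hq.symm
    calc s * ((g:ℤ) * Nm) * q + D = s * ((g:ℤ) * ((Nm:ℤ) * q)) + D := by ring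
      _ = s * ((g:ℤ) * ((p:ℤ) - d₁)) + D := by rw [this]
      _ = s * ((g:ℤ) * p) - s * ((g:ℤ) * d₁) + D := by ring
      _ = s * ((g:ℤ) * p) - s * (s * D) + D := by rw [← hd₁, hD₁def]
      _ = s * ((g:ℤ) * p) - (s * s) * D + D := by ring
      _ = s * ((g:ℤ) * p) := by rw [hss]; ring
  -- lower bound for first count
  have hlow : K + 2 * D' ≤ countDiv A (b * (n : ℤ) + b * c') := by
    rw [hv1, ← hScard]
    apply card_le_countDiv A _ hm1 S hSsub
    intro a ha
    have h1 : a ∣ L := hLdef ▸ Finset.dvd_lcm ha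
    have h2 : (a : ℤ) ∣ (L : ℤ) := Int.natCast_dvd_natCast.mpr h1
    exact Dvd.dvd.mul_left (h2.mul_right q) b
  -- upper bound for second count
  have habs2 : (e * (n : ℤ) + f).natAbs = g * p := by
    rw [hv2, Int.natAbs_mul, Int.natAbs_mul]
    rcases hsor with h | h <;> rw [h] <;> simp
  have hm2 : e * (n : ℤ) + f ≠ 0 := by
    intro h
    rw [h] at habs2
    simp at habs2
    rcases habs2 with h' | h'
    · omega
    · exact hp.ne_zero h'
  have hcop2 : Nat.Coprime g p := by
    apply Nat.Coprime.symm
    rw [Nat.Prime.coprime_iff_not_dvd hp]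
    intro hdvd
    have : p ≤ g := Nat.le_of_dvd hg hdvd
    omega
  have hhigh : countDiv A (e * (n : ℤ) + f) ≤ 2 * D' := by
    calc countDiv A (e * (n : ℤ) + f) ≤ (e * (n : ℤ) + f).natAbs.divisors.card :=
          countDiv_le_card_divisors A _ hm2
      _ = (g * p).divisors.card := by rw [habs2]
      _ = g.divisors.card * p.divisors.card := Nat.Coprime.card_divisors_mul hcop2
      _ = g.divisors.card * 2 := by
          rw [Nat.Prime.divisors hp, Finset.card_insert_of_notMem (by simp [hp.one_lt.ne]),
            Finset.card_singleton]
      _ ≤ g * 2 := Nat.mul_le_mul_right 2 (card_divisors_le_self g hg)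
      _ ≤ 2 * D' := by
          have : g ≤ D' := Nat.le_of_dvd hD' hgD
          omega
  have hfinal : (K : ℤ) ≤ (countDiv A (b * (n : ℤ) + b * c') : ℤ)
      - (countDiv A (e * (n : ℤ) + f) : ℤ) := by
    have h1 : ((K + 2 * D' : ℕ) : ℤ) ≤ (countDiv A (b * (n : ℤ) + b * c') : ℤ) := by
      exact_mod_cast hlow
    have h2 : (countDiv A (e * (n : ℤ) + f) : ℤ) ≤ ((2 * D' : ℕ) : ℤ) := by
      exact_mod_cast hhigh
    push_cast at h1 h2 ⊢
    omega
  exact le_trans hfinal (le_abs_self _)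
end

section
/- Let b, c, e, f be integers with be ≠ 0, bf ≠ ec, and e ∣ f. Then for every infinite set A of positive integers and every K, there exists a positive integer n with |d(A, bn+c) − d(A, en+f)| ≥ K; that is, limsup_{n→∞} |d(A, bn+c) − d(A, en+f)| = ∞. -/
lemma countDiv_subset_divisors {A : Set ℕ} {m : ℤ} (hm : m ≠ 0) :
    {a ∈ A | (a : ℤ) ∣ m} ⊆ ↑(m.natAbs.divisors) := by
  intro a ⟨haA, hadvd⟩
  simp only [Finset.coe_sort_coe, Finset.mem_coe, Nat.mem_divisors]
  refine ⟨?_, by simpa using hm⟩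
  have := Int.natAbs_dvd_natAbs.mpr hadvd
  simpa using this

lemma countDiv_le {A : Set ℕ} {m : ℤ} (hm : m ≠ 0) :
    countDiv A m ≤ m.natAbs.divisors.card := by
  have h := Set.ncard_le_ncard (countDiv_subset_divisors (A := A) hm)
    (m.natAbs.divisors).finite_toSet
  simpa [countDiv, Set.ncard_coe_finset] using h

lemma le_countDiv {A : Set ℕ} {m : ℤ} (hm : m ≠ 0) (B : Finset ℕ) (hB : ↑B ⊆ A)
    (hdvd : ∀ a ∈ B, (a : ℤ) ∣ m) : B.card ≤ countDiv A m := by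
  have hfin : {a ∈ A | (a : ℤ) ∣ m}.Finite :=
    Set.Finite.subset (m.natAbs.divisors).finite_toSet (countDiv_subset_divisors hm)
  have hsub : ↑B ⊆ {a ∈ A | (a : ℤ) ∣ m} := fun a ha => ⟨hB ha, hdvd a (by simpa using ha)⟩
  have := Set.ncard_le_ncard hsub hfin
  simpa [countDiv, Set.ncard_coe_finset] using this

lemma card_divisors_le_self_s6 {n : ℕ} : n.divisors.card ≤ n := by
  have : n.divisors ⊆ Finset.Icc 1 n := by
    intro a ha
    rw [Nat.mem_divisors] at ha
    exact Finset.mem_Icc.mpr ⟨Nat.one_le_iff_ne_zero.mpr (fun h => ha.2 (by simpa [h] using ha.1)),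
      Nat.le_of_dvd (Nat.pos_of_ne_zero ha.2) ha.1⟩
  simpa using Finset.card_le_card this

/-- Sufficiency of Case IV (symmetric version): if `be ≠ 0`, `bf ≠ ec` and `e ∣ f`,
then for every infinite set `A` of positive integers, `|d(A, bn+c) − d(A, en+f)|`
is unbounded. -/
theorem caseIV_sufficiency' (b c e f : ℤ) (hbe : b * e ≠ 0) (hbf : b * f ≠ e * c)
    (hef : e ∣ f) :
    ∀ A : Set ℕ, (∀ a ∈ A, 0 < a) → A.Infinite → ∀ K : ℕ, ∃ n : ℕ, 0 < n ∧
      (K : ℤ) ≤ |(countDiv A (b * n + c) : ℤ) - (countDiv A (e * n + f) : ℤ)| := by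
  intro A hApos hAinf K
  have hb : b ≠ 0 := fun h => hbe (by simp [h])
  have he : e ≠ 0 := fun h => hbe (by simp [h])
  obtain ⟨g, hg⟩ := hef
  have hC : c - b * g ≠ 0 := by
    intro h
    apply hbf
    have hcg : c = b * g := by linarith [sub_eq_zero.mp h]
    rw [hg, hcg]; ring
  set C : ℤ := c - b * g with hCdef
  set N₀ : ℕ := 2 * C.natAbs with hN₀
  -- choose K + N₀ elements of A
  obtain ⟨B, hBsub, hBcard⟩ := hAinf.exists_subset_card_eq (K + N₀)
  set L : ℕ := B.lcm id with hLdef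
  have hLdvd : ∀ a ∈ B, a ∣ L := fun a ha => Finset.dvd_lcm ha
  have hL0 : L ≠ 0 := by
    rw [hLdef, Ne, Finset.lcm_eq_zero_iff]
    intro h
    simp only [Set.mem_image, id] at h
    obtain ⟨a, ha, ha0⟩ := h
    exact absurd ha0 (hApos a (hBsub ha)).ne'
  have hLz : (0 : ℤ) < (L : ℤ) := by exact_mod_cast Nat.pos_of_ne_zero hL0
  set d : ℤ := (Int.gcd (b * L) C : ℤ) with hddef
  have hbL : b * (L : ℤ) ≠ 0 := mul_ne_zero hb (ne_of_gt hLz)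
  have hdpos : 0 < Int.gcd (b * L) C := Int.gcd_pos_iff.mpr (Or.inl hbL)
  have hd0 : d ≠ 0 := by rw [hddef]; exact_mod_cast hdpos.ne'
  set u : ℤ := b * L / d with hudef
  set v : ℤ := C / d with hvdef
  have hu : d * u = b * L := Int.mul_ediv_cancel' (Int.gcd_dvd_left _ _)
  have hv : d * v = C := Int.mul_ediv_cancel' (Int.gcd_dvd_right _ _)
  have huv : Int.gcd u v = 1 := Int.gcd_div_gcd_div_gcd hdpos
  have hu0 : u ≠ 0 := fun h => hbL (by rw [← hu, h, mul_zero])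
  have hv0 : v ≠ 0 := fun h => hC (by rw [← hv, h, mul_zero])
  set N : ℕ := u.natAbs with hNdef
  haveI : NeZero N := ⟨Int.natAbs_ne_zero.mpr hu0⟩
  set s : ℤ := if 0 < u then 1 else -1 with hsdef
  have hs2 : s * s = 1 := by rw [hsdef]; split <;> norm_num
  -- the residue class is a unit
  have hunit : IsUnit ((s * v : ℤ) : ZMod N) := by
    have hcop : (s * v).natAbs.Coprime N := by
      have hnv : (s * v).natAbs = v.natAbs := by
        rw [Int.natAbs_mul, hsdef]; split <;> simp
      rw [hnv, Nat.coprime_comm]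
      exact huv
    have hiu := (ZMod.isUnit_iff_coprime (s * v).natAbs N).mpr hcop
    rcases Int.natAbs_eq (s * v) with h | h
    · rwa [h, Int.cast_natCast]
    · rw [h, Int.cast_neg, Int.cast_natCast]; exact hiu.neg
  -- pick a large prime in the residue class
  obtain ⟨p, hpgt, hpp, hpmod⟩ := Nat.forall_exists_prime_gt_and_eq_mod hunit
    (v.natAbs + u.natAbs * (g.natAbs + 1) + C.natAbs)
  -- solve u * t = s * p - v
  have hdvd1 : (N : ℤ) ∣ (p : ℤ) - s * v := by
    have hcast : ((p : ℤ) : ZMod N) = ((s * v : ℤ) : ZMod N) := by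
      rw [Int.cast_natCast, hpmod]
    exact Int.ModEq.dvd ((ZMod.intCast_eq_intCast_iff _ _ _).mp hcast).symm
  have hdvd2 : u ∣ s * (p : ℤ) - v := by
    have h1 : u ∣ (p : ℤ) - s * v := (Int.natAbs_dvd).mp hdvd1
    have h2 : s * ((p : ℤ) - s * v) = s * p - v := by linear_combination (-v) * hs2
    exact h2 ▸ Dvd.dvd.mul_left h1 s
  set t : ℤ := (s * p - v) / u with htdef
  have hut : u * t = s * p - v := Int.mul_ediv_cancel' hdvd2
  -- t is large
  have habs : (p : ℤ) - v.natAbs ≤ (u.natAbs : ℤ) * t := by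
    rcases hu0.lt_or_gt with h | h
    · have hs : s = -1 := by rw [hsdef]; simp [not_lt.mpr h.le]
      have hna : (u.natAbs : ℤ) = -u := by
        rw [Int.ofNat_natAbs_of_nonpos h.le]
      rw [hna]
      have : -u * t = (p : ℤ) + v := by rw [neg_mul]; rw [hut, hs]; ring
      rw [this]
      have h3 : -(v.natAbs : ℤ) ≤ v := by omega
      linarith
    · have hs : s = 1 := by rw [hsdef]; simp [h]
      have hna : (u.natAbs : ℤ) = u := Int.natAbs_of_nonneg h.le
      rw [hna, hut, hs, one_mul]
      have h3 : v ≤ (v.natAbs : ℤ) := by omega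
      linarith
  have htg : (g.natAbs : ℤ) + 1 < t := by
    have hp1 : (v.natAbs : ℤ) + (u.natAbs : ℤ) * ((g.natAbs : ℤ) + 1) + (C.natAbs : ℤ) < (p : ℤ) := by
      exact_mod_cast hpgt
    have h2 : (u.natAbs : ℤ) * ((g.natAbs : ℤ) + 1) < (u.natAbs : ℤ) * t := by
      have hCnn : (0:ℤ) ≤ (C.natAbs : ℤ) := by positivity
      have hvnn : (0:ℤ) ≤ (v.natAbs : ℤ) := by positivity
      linarith
    exact lt_of_mul_lt_mul_left h2 (by positivity)
  have htpos : 0 < t := by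
    have hgnn : (0:ℤ) ≤ (g.natAbs : ℤ) := by positivity
    linarith
  have hpC : (C.natAbs : ℤ) < p := by
    have hp1 : (v.natAbs : ℤ) + (u.natAbs : ℤ) * ((g.natAbs : ℤ) + 1) + (C.natAbs : ℤ) < (p : ℤ) := by
      exact_mod_cast hpgt
    have h1 : (0:ℤ) ≤ (v.natAbs : ℤ) := by positivity
    have h2 : (0:ℤ) ≤ (u.natAbs : ℤ) * ((g.natAbs : ℤ) + 1) := by positivity
    linarith
  -- define n
  have hnpos : 0 < (L : ℤ) * t - g := by
    have h1 : t ≤ (L : ℤ) * t := le_mul_of_one_le_left htpos.le (by exact_mod_cast Nat.pos_of_ne_zero hL0)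
    have h2 : g ≤ (g.natAbs : ℤ) := Int.le_natAbs
    linarith
  set n : ℕ := ((L : ℤ) * t - g).toNat with hndef
  have hn : (n : ℤ) = (L : ℤ) * t - g := Int.toNat_of_nonneg hnpos.le
  have hn0 : 0 < n := by
    have : (0:ℤ) < (n : ℤ) := by rw [hn]; exact hnpos
    exact_mod_cast this
  refine ⟨n, hn0, ?_⟩
  -- key identities
  have h1 : e * (n : ℤ) + f = e * L * t := by rw [hn, hg]; ring
  have hv' : d * v = c - b * g := hv
  have h2 : b * (n : ℤ) + c = d * (s * p) := by
    rw [hn]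
    linear_combination (-t) * hu + (-1) * hv' + d * hut
  -- upper bound for countDiv A (b n + c)
  have hsp : (s * (p : ℤ)).natAbs = p := by
    rw [Int.natAbs_mul, hsdef]; split <;> simp
  have hbn0 : b * (n : ℤ) + c ≠ 0 := by
    rw [h2]
    apply mul_ne_zero hd0
    apply mul_ne_zero
    · intro h; rw [h] at hs2; simp at hs2
    · exact_mod_cast hpp.pos.ne'
  have hnatAbs : (b * (n : ℤ) + c).natAbs = d.natAbs * p := by
    rw [h2, Int.natAbs_mul, hsp]
  have hdnC : d.natAbs ∣ C.natAbs := Int.natAbs_dvd_natAbs.mpr (Int.gcd_dvd_right _ _)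
  have hdnpos : 0 < d.natAbs := Int.natAbs_pos.mpr hd0
  have hdnle : d.natAbs ≤ C.natAbs := Nat.le_of_dvd (Int.natAbs_pos.mpr hC) hdnC
  have hcop : d.natAbs.Coprime p := by
    rw [Nat.coprime_comm]
    apply (Nat.Prime.coprime_iff_not_dvd hpp).mpr
    intro hdvd
    have := Nat.le_of_dvd hdnpos hdvd
    have : (p : ℤ) ≤ (C.natAbs : ℤ) := by exact_mod_cast this.trans hdnle
    linarith
  have hX : countDiv A (b * (n : ℤ) + c) ≤ N₀ := by
    calc countDiv A (b * (n : ℤ) + c) ≤ (b * (n : ℤ) + c).natAbs.divisors.card :=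
          countDiv_le hbn0
      _ = (d.natAbs * p).divisors.card := by rw [hnatAbs]
      _ = d.natAbs.divisors.card * p.divisors.card := hcop.card_divisors_mul
      _ = d.natAbs.divisors.card * 2 := by
          rw [hpp.divisors, Finset.card_insert_of_notMem (by simp [hpp.one_lt.ne]),
            Finset.card_singleton]
      _ ≤ C.natAbs * 2 := by
          exact Nat.mul_le_mul_right 2 (card_divisors_le_self_s6.trans hdnle)
      _ = N₀ := by rw [hN₀]; ring
  -- lower bound for countDiv A (e n + f)
  have hen0 : e * (n : ℤ) + f ≠ 0 := by
    rw [h1]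
    exact mul_ne_zero (mul_ne_zero he hLz.ne') htpos.ne'
  have hY : K + N₀ ≤ countDiv A (e * (n : ℤ) + f) := by
    rw [← hBcard]
    apply le_countDiv hen0 B hBsub
    intro a ha
    rw [h1]
    have : (a : ℤ) ∣ (L : ℤ) := Int.natCast_dvd_natCast.mpr (hLdvd a ha)
    exact Dvd.dvd.mul_right (Dvd.dvd.mul_left this e) t
  -- conclude
  rw [abs_sub_comm]
  refine le_trans ?_ (le_abs_self _)
  have hXz : (countDiv A (b * (n:ℤ) + c) : ℤ) ≤ (N₀ : ℤ) := by exact_mod_cast hX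
  have hYz : (K : ℤ) + (N₀ : ℤ) ≤ (countDiv A (e * (n:ℤ) + f) : ℤ) := by exact_mod_cast hY
  linarith
end

section
/- Let e be a nonzero integer and f an integer with e ∤ f, and let A = {|e|·m : m a positive integer}. Then A is infinite and d(A, en+f) = 0 for every integer n. Consequently, if also b = 0 and c ≠ 0, then |d(A, bn+c) − d(A, en+f)| = d(A, c) ≤ |c| for all n, so it is bounded. -/
/-- Necessity argument in Case 2: if `e ≠ 0`, `e ∤ f`, and `A = {|e|·m : m ≥ 1}`,
then `A` is infinite, `d(A, en+f) = 0` for every integer `n`, and consequently for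
`b = 0` and `c ≠ 0` the quantity `|d(A, bn+c) − d(A, en+f)|` equals `d(A, c) ≤ |c|`. -/
theorem case2_necessity (e f : ℤ) (he : e ≠ 0) (hef : ¬ e ∣ f) :
    ({x : ℕ | ∃ m : ℕ, 0 < m ∧ x = e.natAbs * m} : Set ℕ).Infinite ∧
    (∀ n : ℤ, countDiv {x : ℕ | ∃ m : ℕ, 0 < m ∧ x = e.natAbs * m} (e * n + f) = 0) ∧
    ∀ b c : ℤ, b = 0 → c ≠ 0 → ∀ n : ℤ,
      |(countDiv {x : ℕ | ∃ m : ℕ, 0 < m ∧ x = e.natAbs * m} (b * n + c) : ℤ) -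
        (countDiv {x : ℕ | ∃ m : ℕ, 0 < m ∧ x = e.natAbs * m} (e * n + f) : ℤ)| =
        (countDiv {x : ℕ | ∃ m : ℕ, 0 < m ∧ x = e.natAbs * m} c : ℤ) ∧
      (countDiv {x : ℕ | ∃ m : ℕ, 0 < m ∧ x = e.natAbs * m} c : ℤ) ≤ |c| := by
  set A : Set ℕ := {x : ℕ | ∃ m : ℕ, 0 < m ∧ x = e.natAbs * m} with hA
  have hepos : 0 < e.natAbs := Int.natAbs_pos.mpr he
  have hzero : ∀ n : ℤ, countDiv A (e * n + f) = 0 := by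
    intro n
    have hempty : {a ∈ A | (a : ℤ) ∣ e * n + f} = ∅ := by
      ext a
      simp only [Set.mem_setOf_eq, Set.mem_empty_iff_false, iff_false, not_and]
      rintro ⟨m, hm, rfl⟩ hdvd
      apply hef
      have h1 : (e.natAbs : ℤ) ∣ e * n + f := dvd_trans ⟨m, by push_cast; ring⟩ hdvd
      have h2 : e ∣ e * n + f := (Int.natAbs_dvd).mp h1
      have := (dvd_add_right (dvd_mul_right e n)).mp h2
      exact this
    rw [countDiv, hempty, Set.ncard_empty]
  refine ⟨?_, hzero, ?_⟩
  · apply Set.infinite_of_injective_forall_mem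
      (f := fun k : ℕ => e.natAbs * (k + 1))
    · intro a b hab
      simp only at hab
      have := Nat.eq_of_mul_eq_mul_left hepos hab
      omega
    · intro k; exact ⟨k + 1, by omega, rfl⟩
  · intro b c hb hc n
    have hbc : b * n + c = c := by rw [hb]; ring
    rw [hbc, hzero]
    constructor
    · simp [abs_of_nonneg]
    · have hsub : {a ∈ A | (a : ℤ) ∣ c} ⊆ Set.Icc 1 c.natAbs := by
        rintro a ⟨⟨m, hm, rfl⟩, hd⟩
        have hd' : (e.natAbs * m : ℕ) ∣ c.natAbs := by
          have := Int.natAbs_dvd_natAbs.mpr hd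
          rwa [Int.natAbs_natCast] at this
        have hle := Nat.le_of_dvd (Int.natAbs_pos.mpr hc) hd'
        constructor
        · exact Nat.one_le_iff_ne_zero.mpr (by positivity)
        · exact hle
      have h1 : countDiv A c ≤ (Set.Icc 1 c.natAbs).ncard :=
        Set.ncard_le_ncard hsub (Set.finite_Icc _ _)
      have h2 : (Set.Icc 1 c.natAbs).ncard = c.natAbs := by
        rw [← Finset.coe_Icc, Set.ncard_coe_finset, Nat.card_Icc]
        omega
      have : countDiv A c ≤ c.natAbs := by rw [← h2]; exact h1
      calc ((countDiv A c : ℤ)) ≤ (c.natAbs : ℤ) := by exact_mod_cast this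
        _ = |c| := (Int.abs_eq_natAbs c).symm
end

section
/- Let b, c be integers with b ≠ 0 and b ∤ c, so that b = x·b₁ and c = x·c₁ with gcd(b₁, c₁) = 1 and b₁ > 1 (where x = gcd(b, c)). Let B > 1 be any integer divisible by b₁, and let A = {B^m : m a positive integer}. Then the function n ↦ d(A, bn+c) is bounded: there is a constant C such that d(A, bn+c) ≤ C for all integers n. -/
/-- Key claim in the necessity argument of Case 3: if `b ≠ 0`, `b ∤ c`, `b = x·b₁`,
`c = x·c₁` with `x = gcd(b, c)`, `gcd(b₁, c₁) = 1` and `b₁ > 1`, and `B > 1` is an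
integer divisible by `b₁`, then with `A = {B^m : m ≥ 1}` the function
`n ↦ d(A, bn+c)` is bounded. -/
theorem case3_necessity_key (b c x b₁ c₁ : ℤ) (hb : b ≠ 0) (hbc : ¬ b ∣ c)
    (hx : x = Int.gcd b c) (hb' : b = x * b₁) (hc' : c = x * c₁)
    (hcop : Int.gcd b₁ c₁ = 1) (hb₁ : 1 < b₁)
    (B : ℕ) (hB : 1 < B) (hdvd : b₁ ∣ (B : ℤ)) :
    ∃ C : ℕ, ∀ n : ℤ,
      countDiv {y : ℕ | ∃ m : ℕ, 0 < m ∧ y = B ^ m} (b * n + c) ≤ C := by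
  refine ⟨x.natAbs, fun n => ?_⟩
  have hxne : x ≠ 0 := by
    rintro rfl; simp at hb'; exact hb hb'
  have hcop' : IsCoprime b₁ (b₁ * n + c₁) := by
    have h := (Int.isCoprime_iff_gcd_eq_one.mpr hcop).add_mul_left_right n
    rwa [add_comm] at h
  have hsub : {a ∈ {y : ℕ | ∃ m : ℕ, 0 < m ∧ y = B ^ m} | (a : ℤ) ∣ b * n + c}
      ⊆ (fun m => B ^ m) '' Set.Icc 1 x.natAbs := by
    rintro a ⟨⟨m, hm, rfl⟩, hdvd'⟩
    refine ⟨m, ⟨hm, ?_⟩, rfl⟩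
    have h1 : b₁ ^ m ∣ (B : ℤ) ^ m := pow_dvd_pow_of_dvd hdvd m
    have h2 : b₁ ^ m ∣ x * (b₁ * n + c₁) := by
      have : b * n + c = x * (b₁ * n + c₁) := by rw [hb', hc']; ring
      rw [← this]
      exact h1.trans (by push_cast at hdvd' ⊢; exact hdvd')
    have h3 : b₁ ^ m ∣ x := (hcop'.pow_left).dvd_of_dvd_mul_right h2
    have h4 : b₁ ^ m ≤ |x| := Int.le_of_dvd (abs_pos.mpr hxne) (h3.trans (self_dvd_abs x))
    have h5 : (m : ℤ) < 2 ^ m := by exact_mod_cast (Nat.lt_two_pow_self (n := m))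
    have h6 : (2 : ℤ) ^ m ≤ b₁ ^ m := pow_le_pow_left₀ (by norm_num) hb₁ m
    have : (m : ℤ) < (x.natAbs : ℤ) + 1 := by
      rw [Int.abs_eq_natAbs] at h4; omega
    omega
  calc {a ∈ {y : ℕ | ∃ m : ℕ, 0 < m ∧ y = B ^ m} | (a : ℤ) ∣ b * n + c}.ncard
      ≤ ((fun m => B ^ m) '' Set.Icc 1 x.natAbs).ncard :=
        Set.ncard_le_ncard hsub ((Set.finite_Icc _ _).image _)
    _ ≤ (Set.Icc 1 x.natAbs).ncard := Set.ncard_image_le (Set.finite_Icc _ _)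
    _ = x.natAbs := by rw [Set.ncard_eq_toFinset_card' , Set.toFinset_Icc, Nat.card_Icc]; omega
end
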